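/- Let e be a singular idempotent transformation of {1,...,n} and g ∈ S_n. Then ⟨C_e⟩ = ⟨C_{eg}⟩ = (eg)^{S_n}; i.e., the semigroup generated by the S_n-conjugates of the singular transformation a = eg equals the non-invertible part of ⟨{a} ∪ S_n⟩ and is idempotent generated. -/

import Mathlib

/-- The full transformation monoid on `{1,...,n}`, modeled as `Function.End (Fin n)`
(multiplication is composition). -/
abbrev Tn (n : ℕ) := Function.End (Fin n)

/-- A permutation viewed as a transformation. -/
def ofPerm {n : ℕ} (g : Equiv.Perm (Fin n)) : Tn n := ⇑g

/-- The rank of a transformation: the size of its image. -/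
def rnk {n : ℕ} (a : Tn n) : ℕ := (Finset.univ.image a).card

/-- The symmetric group embedded in `Tn n` as a set. -/
def perms (n : ℕ) : Set (Tn n) := Set.range (fun g : Equiv.Perm (Fin n) => ofPerm g)

/-- The `S_n`-conjugacy class of a transformation. -/
def conjClass {n : ℕ} (t : Tn n) : Set (Tn n) :=
  {s | ∃ g : Equiv.Perm (Fin n), s = ofPerm g⁻¹ * t * ofPerm g}

namespace LMF
open Equiv Finset

variable {n : ℕ}

lemma end_mul_apply (f g : Tn n) (x : Fin n) : (f * g) x = f (g x) := rfl

lemma ofPerm_mul (g h : Equiv.Perm (Fin n)) : ofPerm (g * h) = ofPerm g * ofPerm h := rfl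

lemma ofPerm_one : ofPerm (1 : Equiv.Perm (Fin n)) = 1 := rfl

/-- extend a partial injection on a finset to a permutation -/
lemma exists_perm_extend (s : Finset (Fin n)) (f : Fin n → Fin n)
    (hf : Set.InjOn f ↑s) : ∃ σ : Equiv.Perm (Fin n), ∀ x ∈ s, σ x = f x := by
  classical
  have hcard : (s.image f).card = s.card := Finset.card_image_of_injOn hf
  have hbij : Function.Bijective (fun x : {x // x ∈ s} =>
      (⟨f x.1, Finset.mem_image_of_mem f x.2⟩ : {x // x ∈ s.image f})) := by
    rw [Fintype.bijective_iff_injective_and_card]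
    constructor
    · intro a b hab
      exact Subtype.ext (hf a.2 b.2 (congrArg Subtype.val hab))
    · rw [Fintype.card_coe]
      have : Fintype.card {x // x ∈ s.image f} = (s.image f).card := Fintype.card_coe _
      omega
  refine ⟨(Equiv.ofBijective _ hbij).extendSubtype, fun x hx => ?_⟩
  have := Equiv.extendSubtype_apply_of_mem (Equiv.ofBijective _ hbij) x hx
  rw [this]
  rfl

end LMF

namespace LMF
open Equiv Finset

variable {n : ℕ}

section WithE
variable (e : Tn n) (he : e * e = e) (hs : ¬ Function.Bijective e)

/-- image of e as a finset -/
noncomputable def V : Finset (Fin n) := Finset.univ.image e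

lemma mem_V_iff {x : Fin n} : x ∈ V e ↔ ∃ y, e y = x := by
  simp [V]
  exact ⟨fun h => by obtain ⟨y, -, hy⟩ := Finset.mem_image.mp h; exact ⟨y, hy⟩,
    fun ⟨y, hy⟩ => Finset.mem_image.mpr ⟨y, Finset.mem_univ _, hy⟩⟩

include he in
lemma e_fix {v : Fin n} (hv : v ∈ V e) : e v = v := by
  rcases (mem_V_iff e).mp hv with ⟨y, rfl⟩
  exact congrFun he y

include hs in
lemma not_surj : ¬ Function.Surjective e := fun h => hs ⟨
    (Finite.injective_iff_surjective).mpr h, h⟩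

include hs in
lemma card_V_lt : (V e).card < n := by
  have hle : (V e).card ≤ n := by simpa using Finset.card_le_univ (V e)
  rcases eq_or_lt_of_le hle with h | h
  · exfalso
    apply not_surj e hs
    have hV : V e = Finset.univ := Finset.eq_univ_of_card _ (by simpa using h)
    intro y
    exact (mem_V_iff e).mp (hV ▸ Finset.mem_univ y)
  · exact h

lemma conj_mem_conjClass (t : Tn n) (σ : Equiv.Perm (Fin n)) :
    ofPerm σ * t * ofPerm σ⁻¹ ∈ conjClass t := ⟨σ⁻¹, by rw [inv_inv]⟩

include he in
/-- conjugate fixing a prescribed r-set pointwise -/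
lemma prim0 (P : Finset (Fin n)) (hP : P.card = (V e).card) :
    ∃ c ∈ conjClass e, ∀ x ∈ P, c x = x := by
  classical
  obtain ⟨β⟩ : Nonempty ({x // x ∈ V e} ≃ {x // x ∈ P}) :=
    ⟨Fintype.equivOfCardEq (by simp [Fintype.card_coe, hP])⟩
  obtain ⟨σ, hσ⟩ := exists_perm_extend (V e) (fun x =>
      if h : x ∈ V e then (β ⟨x, h⟩ : Fin n) else x) (by
    intro a ha b hb hab
    simp only [Finset.mem_coe] at ha hb
    simp only [dif_pos ha, dif_pos hb] at hab
    have := β.injective (Subtype.ext hab)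
    exact congrArg Subtype.val this)
  refine ⟨ofPerm σ * e * ofPerm σ⁻¹, conj_mem_conjClass e σ, fun x hx => ?_⟩
  -- σ maps V e onto P bijectively; find v with σ v = x
  obtain ⟨v, hv⟩ := β.surjective ⟨x, hx⟩
  have hσv : σ v.1 = x := by
    rw [hσ v.1 v.2, dif_pos v.2, hv]
  have : σ⁻¹ x = v.1 := by rw [← hσv]; simp
  show σ (e (σ⁻¹ x)) = x
  rw [this, e_fix e he v.2, hσv]

include he hs in
/-- conjugate moving `p ↦ q` and fixing the rest of `P` pointwise -/
lemma prim (P : Finset (Fin n)) (hP : P.card = (V e).card) (p q : Fin n)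
    (hp : p ∈ P) (hq : q ∉ P) :
    ∃ c ∈ conjClass e, c p = q ∧ ∀ x ∈ P, x ≠ p → c x = x := by
  classical
  obtain ⟨u0, hu0⟩ : ∃ u0, u0 ∉ V e := by
    by_contra h
    push_neg at h
    exact not_surj e hs (fun y => (mem_V_iff e).mp (h y))
  set v0 : Fin n := e u0 with hv0
  have hv0V : v0 ∈ V e := (mem_V_iff e).mpr ⟨u0, rfl⟩
  have hu0v0 : u0 ≠ v0 := fun h => hu0 (h ▸ hv0V)
  have hcard : ((V e).erase v0).card = (P.erase p).card := by
    rw [Finset.card_erase_of_mem hv0V, Finset.card_erase_of_mem hp, hP]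
  obtain ⟨β⟩ : Nonempty ({x // x ∈ (V e).erase v0} ≃ {x // x ∈ P.erase p}) :=
    ⟨Fintype.equivOfCardEq (by rw [Fintype.card_coe, Fintype.card_coe, hcard])⟩
  set s : Finset (Fin n) := insert u0 (V e) with hsdef
  set f : Fin n → Fin n := fun x =>
    if x = u0 then p else if x = v0 then q else
      if h : x ∈ (V e).erase v0 then (β ⟨x, h⟩ : Fin n) else x with hfdef
  have hfu0 : f u0 = p := by simp [hfdef]
  have hfv0 : f v0 = q := by simp [hfdef, Ne.symm hu0v0]
  have hgen : ∀ x ∈ s, x ≠ u0 → x ≠ v0 →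
      ∃ h : x ∈ (V e).erase v0, f x = (β ⟨x, h⟩ : Fin n) := by
    intro x hx hxu hxv
    have hxV : x ∈ V e := by
      rcases Finset.mem_insert.mp hx with h | h
      · exact absurd h hxu
      · exact h
    have hmem : x ∈ (V e).erase v0 := Finset.mem_erase.mpr ⟨hxv, hxV⟩
    exact ⟨hmem, by simp only [hfdef]; rw [if_neg hxu, if_neg hxv, dif_pos hmem]⟩
  have hinj : Set.InjOn f ↑s := by
    intro a ha b hb hab
    simp only [Finset.mem_coe] at ha hb
    by_cases hau : a = u0 <;> by_cases hbu : b = u0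
    · rw [hau, hbu]
    all_goals by_cases hav : a = v0 <;> by_cases hbv : b = v0
    all_goals try (exact hav ▸ hbv ▸ rfl)
    all_goals try (
      first
      | (exfalso; subst hau; rw [hfu0] at hab
         first
         | (subst hbv; rw [hfv0] at hab; exact hq (hab ▸ hp))
         | (obtain ⟨hm, hfe⟩ := hgen b hb hbu hbv; rw [hfe] at hab
            exact (Finset.mem_erase.mp (β ⟨b, hm⟩).2).1 hab.symm))
      | (exfalso; subst hbu; rw [hfu0] at hab
         first
         | (subst hav; rw [hfv0] at hab; exact hq (hab ▸ hp))
         | (obtain ⟨hm, hfe⟩ := hgen a ha hau hav; rw [hfe] at hab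
            exact (Finset.mem_erase.mp (β ⟨a, hm⟩).2).1 hab))
      | (exfalso; subst hav; rw [hfv0] at hab
         obtain ⟨hm, hfe⟩ := hgen b hb hbu hbv; rw [hfe] at hab
         exact hq (hab ▸ (Finset.mem_erase.mp (β ⟨b, hm⟩).2).2))
      | (exfalso; subst hbv; rw [hfv0] at hab
         obtain ⟨hm, hfe⟩ := hgen a ha hau hav; rw [hfe] at hab
         exact hq (hab ▸ (Finset.mem_erase.mp (β ⟨a, hm⟩).2).2)))
    · -- generic/generic
      obtain ⟨hma, hfa⟩ := hgen a ha hau hav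
      obtain ⟨hmb, hfb⟩ := hgen b hb hbu hbv
      rw [hfa, hfb] at hab
      have := β.injective (Subtype.ext hab)
      exact congrArg Subtype.val this
  obtain ⟨σ, hσ⟩ := exists_perm_extend s f hinj
  have hσu0 : σ u0 = p := by rw [hσ u0 (Finset.mem_insert_self _ _), hfu0]
  have hσv0 : σ v0 = q := by
    rw [hσ v0 (Finset.mem_insert_of_mem hv0V), hfv0]
  refine ⟨ofPerm σ * e * ofPerm σ⁻¹, conj_mem_conjClass e σ, ?_, ?_⟩
  · show σ (e (σ⁻¹ p)) = q
    have : σ⁻¹ p = u0 := by rw [← hσu0]; simp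
    rw [this, ← hv0, hσv0]
  · intro x hx hxp
    obtain ⟨w, hw⟩ := β.surjective ⟨x, Finset.mem_erase.mpr ⟨hxp, hx⟩⟩
    have hwV : w.1 ∈ V e := (Finset.mem_erase.mp w.2).2
    have hwu : w.1 ≠ u0 := fun h => hu0 (h ▸ hwV)
    have hσw : σ w.1 = x := by
      obtain ⟨hm, hfe⟩ := hgen w.1 (Finset.mem_insert_of_mem hwV) hwu
        (Finset.mem_erase.mp w.2).1
      rw [hσ w.1 (Finset.mem_insert_of_mem hwV), hfe]
      have hww : (⟨w.1, hm⟩ : {x // x ∈ (V e).erase v0}) = w := Subtype.ext rfl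
      rw [hww, hw]
    show σ (e (σ⁻¹ x)) = x
    have : σ⁻¹ x = w.1 := by rw [← hσw]; simp
    rw [this, e_fix e he hwV, hσw]

include he hs in
/-- simulate a swap on any r-set by an element of the closure -/
lemma sw (u w : Fin n) (huw : u ≠ w) (U : Finset (Fin n)) (hU : U.card = (V e).card) :
    ∃ s ∈ Subsemigroup.closure (conjClass e), ∀ z ∈ U, s z = Equiv.swap u w z := by
  classical
  by_cases hu : u ∈ U <;> by_cases hw : w ∈ U
  · -- both in U : use a free cell
    obtain ⟨f0, hf0⟩ : ∃ f0, f0 ∉ U := by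
      by_contra h
      push_neg at h
      have : (Finset.univ : Finset (Fin n)) ⊆ U := fun x _ => h x
      have := Finset.card_le_card this
      simp only [Finset.card_univ, Fintype.card_fin] at this
      have hlt := card_V_lt e hs
      omega
    obtain ⟨c1, hc1m, hc1u, hc1fix⟩ := prim e he hs U hU u f0 hu hf0
    have hUcard_pos : 1 ≤ U.card := Finset.card_pos.mpr ⟨u, hu⟩
    set U1 : Finset (Fin n) := insert f0 (U.erase u) with hU1
    have hf0e : f0 ∉ U.erase u := fun h => hf0 (Finset.mem_of_mem_erase h)
    have hU1card : U1.card = (V e).card := by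
      rw [hU1, Finset.card_insert_of_notMem hf0e, Finset.card_erase_of_mem hu, ← hU]
      omega
    have hwU1 : w ∈ U1 := Finset.mem_insert_of_mem (Finset.mem_erase.mpr ⟨Ne.symm huw, hw⟩)
    have huU1 : u ∉ U1 := by
      intro h
      rcases Finset.mem_insert.mp h with h | h
      · exact hf0 (h ▸ hu)
      · exact (Finset.mem_erase.mp h).1 rfl
    obtain ⟨c2, hc2m, hc2w, hc2fix⟩ := prim e he hs U1 hU1card w u hwU1 huU1
    set U2 : Finset (Fin n) := insert u (U1.erase w) with hU2
    have hwU1e : w ∉ U1.erase w := fun h => (Finset.mem_erase.mp h).1 rfl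
    have huU1e : u ∉ U1.erase w := fun h => huU1 (Finset.mem_of_mem_erase h)
    have hU2card : U2.card = (V e).card := by
      have h1 : 1 ≤ U1.card := Finset.card_pos.mpr ⟨w, hwU1⟩
      rw [hU2, Finset.card_insert_of_notMem huU1e, Finset.card_erase_of_mem hwU1, hU1card]
      rw [hU1card] at h1
      omega
    have hf0U2 : f0 ∈ U2 := by
      refine Finset.mem_insert_of_mem (Finset.mem_erase.mpr ⟨?_, Finset.mem_insert_self _ _⟩)
      exact fun h => hf0 (h ▸ hw)
    have hwU2 : w ∉ U2 := by
      intro h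
      rcases Finset.mem_insert.mp h with h | h
      · exact huw h.symm
      · exact hwU1e h
    obtain ⟨c3, hc3m, hc3f0, hc3fix⟩ := prim e he hs U2 hU2card f0 w hf0U2 hwU2
    refine ⟨c3 * c2 * c1, ?_, ?_⟩
    · exact mul_mem (mul_mem (Subsemigroup.subset_closure hc3m)
        (Subsemigroup.subset_closure hc2m)) (Subsemigroup.subset_closure hc1m)
    · intro z hz
      show c3 (c2 (c1 z)) = Equiv.swap u w z
      by_cases hzu : z = u
      · subst hzu
        rw [hc1u, hc2fix f0 (Finset.mem_insert_self _ _) (fun h => hf0 (h ▸ hw)),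
          hc3f0, Equiv.swap_apply_left]
      · by_cases hzw : z = w
        · subst hzw
          rw [hc1fix z hz hzu, hc2w, hc3fix u (Finset.mem_insert_self _ _)
            (fun h => hf0 (h ▸ hu)), Equiv.swap_apply_right]
        · have hz1 : z ∈ U1 := Finset.mem_insert_of_mem (Finset.mem_erase.mpr ⟨hzu, hz⟩)
          have hz2 : z ∈ U2 := Finset.mem_insert_of_mem (Finset.mem_erase.mpr ⟨hzw, hz1⟩)
          rw [hc1fix z hz hzu, hc2fix z hz1 hzw,
            hc3fix z hz2 (fun h => hf0 (h ▸ hz)), Equiv.swap_apply_of_ne_of_ne hzu hzw]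
  · -- u ∈ U, w ∉ U
    obtain ⟨c, hcm, hcu, hcfix⟩ := prim e he hs U hU u w hu hw
    refine ⟨c, Subsemigroup.subset_closure hcm, fun z hz => ?_⟩
    by_cases hzu : z = u
    · subst hzu; rw [hcu, Equiv.swap_apply_left]
    · have hzw : z ≠ w := fun h => hw (h ▸ hz)
      rw [hcfix z hz hzu, Equiv.swap_apply_of_ne_of_ne hzu hzw]
  · -- w ∈ U, u ∉ U
    obtain ⟨c, hcm, hcw, hcfix⟩ := prim e he hs U hU w u hw hu
    refine ⟨c, Subsemigroup.subset_closure hcm, fun z hz => ?_⟩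
    by_cases hzw : z = w
    · subst hzw; rw [hcw, Equiv.swap_apply_right]
    · have hzu : z ≠ u := fun h => hu (h ▸ hz)
      rw [hcfix z hz hzw, Equiv.swap_apply_of_ne_of_ne hzu hzw]
  · -- neither
    obtain ⟨c, hcm, hcfix⟩ := prim0 e he U hU
    refine ⟨c, Subsemigroup.subset_closure hcm, fun z hz => ?_⟩
    have hzu : z ≠ u := fun h => hu (h ▸ hz)
    have hzw : z ≠ w := fun h => hw (h ▸ hz)
    rw [hcfix z hz, Equiv.swap_apply_of_ne_of_ne hzu hzw]

include he hs in
lemma realize_perm (π : Equiv.Perm (Fin n)) :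
    ∀ U : Finset (Fin n), U.card = (V e).card →
      ∃ x ∈ Subsemigroup.closure (conjClass e), ∀ z ∈ U, x z = π z := by
  refine Equiv.Perm.swap_induction_on π ?_ ?_
  · intro U hU
    obtain ⟨c, hcm, hcfix⟩ := prim0 e he U hU
    exact ⟨c, Subsemigroup.subset_closure hcm, fun z hz => by
      rw [hcfix z hz, Equiv.Perm.one_apply]⟩
  · intro f u w huw IH U hU
    obtain ⟨x', hx'm, hx'⟩ := IH U hU
    have hU' : (U.image ⇑f).card = (V e).card := by
      rw [Finset.card_image_of_injective U f.injective, hU]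
    obtain ⟨s, hsm, hsw⟩ := sw e he hs u w huw (U.image ⇑f) hU'
    refine ⟨s * x', mul_mem hsm hx'm, fun z hz => ?_⟩
    show s (x' z) = (Equiv.swap u w * f) z
    rw [hx' z hz, hsw (f z) (Finset.mem_image_of_mem _ hz), Equiv.Perm.mul_apply]

include he hs in
lemma perm_mul_mem (p q : Equiv.Perm (Fin n)) :
    ofPerm p * e * ofPerm q ∈ Subsemigroup.closure (conjClass e) := by
  classical
  have hU : ((V e).image ⇑q⁻¹).card = (V e).card :=
    Finset.card_image_of_injective _ q⁻¹.injective
  obtain ⟨x, hxm, hx⟩ := realize_perm e he hs (p * q) _ hU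
  have key : ofPerm p * e * ofPerm q = x * (ofPerm q⁻¹ * e * ofPerm q) := by
    funext z
    have hv : e (q z) ∈ V e := (mem_V_iff e).mpr ⟨q z, rfl⟩
    have hmem : q⁻¹ (e (q z)) ∈ (V e).image ⇑q⁻¹ := Finset.mem_image_of_mem _ hv
    show p (e (q z)) = x (q⁻¹ (e (q z)))
    rw [hx _ hmem, Equiv.Perm.mul_apply, show ∀ y, q (q⁻¹ y) = y from fun y => q.apply_symm_apply y]
  rw [key]
  exact mul_mem hxm (Subsemigroup.subset_closure ⟨q, rfl⟩)

lemma conj_closure_mem (t : Tn n) {x : Tn n}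
    (hx : x ∈ Subsemigroup.closure (conjClass t)) (h : Equiv.Perm (Fin n)) :
    ofPerm h⁻¹ * x * ofPerm h ∈ Subsemigroup.closure (conjClass t) := by
  induction hx using Subsemigroup.closure_induction with
  | mem y hy =>
    obtain ⟨g, rfl⟩ := hy
    refine Subsemigroup.subset_closure ⟨g * h, ?_⟩
    rw [mul_inv_rev, ofPerm_mul, ofPerm_mul]
    simp [mul_assoc]
  | mul a b ha hb iha ihb =>
    have hre : ofPerm h⁻¹ * (a * b) * ofPerm h =
        (ofPerm h⁻¹ * a * ofPerm h) * (ofPerm h⁻¹ * b * ofPerm h) := by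
      have h1 : ofPerm h * ofPerm h⁻¹ = 1 := by
        rw [← ofPerm_mul, mul_inv_cancel, ofPerm_one]
      calc ofPerm h⁻¹ * (a * b) * ofPerm h
          = ofPerm h⁻¹ * a * (ofPerm h * ofPerm h⁻¹) * b * ofPerm h := by
            rw [h1]; simp [mul_assoc]
        _ = (ofPerm h⁻¹ * a * ofPerm h) * (ofPerm h⁻¹ * b * ofPerm h) := by
            simp [mul_assoc]
    rw [hre]
    exact mul_mem iha ihb

include he hs in
lemma right_mul_mem {x : Tn n} (hx : x ∈ Subsemigroup.closure (conjClass e))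
    (s : Equiv.Perm (Fin n)) :
    x * ofPerm s ∈ Subsemigroup.closure (conjClass e) := by
  induction hx using Subsemigroup.closure_induction with
  | mem y hy =>
    obtain ⟨g, rfl⟩ := hy
    have : ofPerm g⁻¹ * e * ofPerm g * ofPerm s = ofPerm g⁻¹ * e * ofPerm (g * s) := by
      rw [ofPerm_mul, mul_assoc, mul_assoc]
    rw [this]
    exact perm_mul_mem e he hs g⁻¹ (g * s)
  | mul a b ha hb iha ihb =>
    rw [mul_assoc]
    exact mul_mem ha ihb

include he hs in
lemma left_mul_mem {x : Tn n} (hx : x ∈ Subsemigroup.closure (conjClass e))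
    (s : Equiv.Perm (Fin n)) :
    ofPerm s * x ∈ Subsemigroup.closure (conjClass e) := by
  induction hx using Subsemigroup.closure_induction with
  | mem y hy =>
    obtain ⟨g, rfl⟩ := hy
    have : ofPerm s * (ofPerm g⁻¹ * e * ofPerm g) = ofPerm (s * g⁻¹) * e * ofPerm g := by
      rw [ofPerm_mul]
      simp [mul_assoc]
    rw [this]
    exact perm_mul_mem e he hs (s * g⁻¹) g
  | mul a b ha hb iha ihb =>
    rw [← mul_assoc]
    exact mul_mem iha hb

include he in
lemma e_mem_Xa (g : Equiv.Perm (Fin n)) :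
    e ∈ Subsemigroup.closure (conjClass (ofPerm g * e)) := by
  set a : Tn n := ofPerm g * e with ha
  have step : ∀ k : ℕ, e * ofPerm (g ^ (k + 1)) ∈ Subsemigroup.closure (conjClass a) := by
    intro k
    induction k with
    | zero =>
      refine Subsemigroup.subset_closure ⟨g, ?_⟩
      rw [pow_one, ha]
      symm
      calc ofPerm g⁻¹ * (ofPerm g * e) * ofPerm g
          = (ofPerm g⁻¹ * ofPerm g) * e * ofPerm g := by simp only [mul_assoc]
        _ = e * ofPerm g := by rw [← ofPerm_mul, inv_mul_cancel, ofPerm_one, one_mul]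
    | succ k IH =>
      have hperm : ofPerm (g ^ (k + 1)) * ofPerm ((g ^ (k + 2))⁻¹) * ofPerm g
          = (1 : Tn n) := by
        rw [← ofPerm_mul, ← ofPerm_mul, ← ofPerm_one]
        group
      have key : e * ofPerm (g ^ (k + 2)) =
          (e * ofPerm (g ^ (k + 1))) *
            (ofPerm ((g ^ (k + 2))⁻¹) * a * ofPerm (g ^ (k + 2))) := by
        rw [ha]
        calc e * ofPerm (g ^ (k + 2))
            = (e * e) * ofPerm (g ^ (k + 2)) := by rw [he]
          _ = e * (ofPerm (g ^ (k + 1)) * ofPerm ((g ^ (k + 2))⁻¹) * ofPerm g) * e *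
                ofPerm (g ^ (k + 2)) := by rw [hperm, mul_one]
          _ = (e * ofPerm (g ^ (k + 1))) *
                (ofPerm ((g ^ (k + 2))⁻¹) * (ofPerm g * e) * ofPerm (g ^ (k + 2))) := by
              simp only [mul_assoc]
      rw [key]
      exact mul_mem IH (Subsemigroup.subset_closure ⟨g ^ (k + 2), rfl⟩)
  have hm : orderOf g - 1 + 1 = orderOf g := Nat.succ_pred_eq_of_pos (orderOf_pos g)
  have := step (orderOf g - 1)
  rw [hm, pow_orderOf_eq_one, ofPerm_one, mul_one] at this
  exact this

include he hs in
lemma closure_eq (g : Equiv.Perm (Fin n)) :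
    Subsemigroup.closure (conjClass (ofPerm g * e)) = Subsemigroup.closure (conjClass e) := by
  apply le_antisymm
  · rw [Subsemigroup.closure_le]
    rintro x ⟨h, rfl⟩
    have : ofPerm h⁻¹ * (ofPerm g * e) * ofPerm h = ofPerm (h⁻¹ * g) * e * ofPerm h := by
      rw [ofPerm_mul]
      simp only [mul_assoc]
    rw [this]
    exact perm_mul_mem e he hs (h⁻¹ * g) h
  · rw [Subsemigroup.closure_le]
    rintro x ⟨h, rfl⟩
    exact conj_closure_mem _ (e_mem_Xa e he g) h

include hs in
lemma not_bij_a (g : Equiv.Perm (Fin n)) : ¬ Function.Bijective (ofPerm g * e) := by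
  intro hb
  apply hs
  have hinj : Function.Injective e := by
    have : Function.Injective (⇑g ∘ e) := hb.injective
    exact Function.Injective.of_comp this
  exact (Finite.injective_iff_bijective).mp hinj

lemma not_bij_of_mem_closure {a : Tn n} (hna : ¬ Function.Bijective a) {x : Tn n}
    (hx : x ∈ Subsemigroup.closure (conjClass a)) : ¬ Function.Bijective x := by
  induction hx using Subsemigroup.closure_induction with
  | mem y hy =>
    obtain ⟨h, rfl⟩ := hy
    intro hb
    apply hna
    have : a = ofPerm h * (ofPerm h⁻¹ * a * ofPerm h) * ofPerm h⁻¹ := by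
      have h1 : ofPerm h * ofPerm h⁻¹ = (1 : Tn n) := by
        rw [← ofPerm_mul, mul_inv_cancel, ofPerm_one]
      calc a = 1 * a * 1 := by rw [one_mul, mul_one]
        _ = (ofPerm h * ofPerm h⁻¹) * a * (ofPerm h * ofPerm h⁻¹) := by rw [h1]
        _ = ofPerm h * (ofPerm h⁻¹ * a * ofPerm h) * ofPerm h⁻¹ := by
            simp only [mul_assoc]
    rw [this]
    exact (h.bijective.comp hb).comp h⁻¹.bijective
  | mul p q hp hq ihp ihq =>
    intro hb
    apply ihq
    have hinj : Function.Injective (q : Fin n → Fin n) := by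
      have h2 : Function.Injective (p ∘ q) := hb.injective
      exact Function.Injective.of_comp h2
    exact (Finite.injective_iff_bijective).mp hinj

end WithE
end LMF

/-- Levi–McFadden: for singular `a = eg`, `⟨C_a⟩ = ⟨C_e⟩ = a^{S_n}` and it is
idempotent generated. -/
theorem stmt11 (n : ℕ) (e : Tn n) (he : e * e = e) (hs : ¬ Function.Bijective e)
    (g : Equiv.Perm (Fin n)) :
    Subsemigroup.closure (conjClass (ofPerm g * e)) = Subsemigroup.closure (conjClass e) ∧
    (↑(Subsemigroup.closure (conjClass (ofPerm g * e))) : Set (Tn n)) =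
      ↑(Subsemigroup.closure ({ofPerm g * e} ∪ perms n)) \ perms n ∧
    ∃ E : Set (Tn n), (∀ x ∈ E, x * x = x) ∧
      Subsemigroup.closure (conjClass (ofPerm g * e)) = Subsemigroup.closure E := by
  classical
  have hEq := LMF.closure_eq e he hs g
  refine ⟨hEq, ?_, conjClass e, ?_, hEq⟩
  · ext x
    constructor
    · intro hx
      have hxm : x ∈ Subsemigroup.closure (conjClass (ofPerm g * e)) := hx
      constructor
      · have hle : Subsemigroup.closure (conjClass (ofPerm g * e)) ≤
            Subsemigroup.closure ({ofPerm g * e} ∪ perms n) := by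
          rw [Subsemigroup.closure_le]
          rintro y ⟨h, rfl⟩
          have h1 : ofPerm h⁻¹ ∈ Subsemigroup.closure ({ofPerm g * e} ∪ perms n) :=
            Subsemigroup.subset_closure (Or.inr ⟨h⁻¹, rfl⟩)
          have h2 : ofPerm g * e ∈ Subsemigroup.closure ({ofPerm g * e} ∪ perms n) :=
            Subsemigroup.subset_closure (Or.inl rfl)
          have h3 : ofPerm h ∈ Subsemigroup.closure ({ofPerm g * e} ∪ perms n) :=
            Subsemigroup.subset_closure (Or.inr ⟨h, rfl⟩)
          exact mul_mem (mul_mem h1 h2) h3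
        exact hle hxm
      · rintro ⟨h, rfl⟩
        exact LMF.not_bij_of_mem_closure (LMF.not_bij_a e hs g) hxm h.bijective
    · rintro ⟨hx, hnp⟩
      let S : Subsemigroup (Tn n) :=
        { carrier := ↑(Subsemigroup.closure (conjClass (ofPerm g * e))) ∪ perms n
          mul_mem' := by
            rintro p q (hp | ⟨s, rfl⟩) (hq | ⟨t, rfl⟩)
            · exact Or.inl (mul_mem hp hq)
            · refine Or.inl ?_
              have hp' : p ∈ Subsemigroup.closure (conjClass e) := hEq ▸ hp
              have := LMF.right_mul_mem e he hs hp' t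
              exact hEq.symm ▸ this
            · refine Or.inl ?_
              have hq' : q ∈ Subsemigroup.closure (conjClass e) := hEq ▸ hq
              have := LMF.left_mul_mem e he hs hq' s
              exact hEq.symm ▸ this
            · exact Or.inr ⟨s * t, (LMF.ofPerm_mul s t).symm⟩ }
      have hSle : Subsemigroup.closure ({ofPerm g * e} ∪ perms n) ≤ S := by
        rw [Subsemigroup.closure_le]
        rintro y (rfl | ⟨h, rfl⟩)
        · refine Or.inl (Subsemigroup.subset_closure ⟨1, ?_⟩)
          rw [inv_one, LMF.ofPerm_one, one_mul, mul_one]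
        · exact Or.inr ⟨h, rfl⟩
      rcases hSle hx with h | h
      · exact h
      · exact absurd h hnp
  · rintro x ⟨h, rfl⟩
    funext z
    show (ofPerm h⁻¹ * e * ofPerm h) ((ofPerm h⁻¹ * e * ofPerm h) z) = _
    simp only [LMF.end_mul_apply]
    show h⁻¹ (e (h (h⁻¹ (e (h z))))) = h⁻¹ (e (h z))
    rw [show ∀ y, h (h⁻¹ y) = y from fun y => h.apply_symm_apply y]
    exact congrArg (⇑h⁻¹) (congrFun he (h z))
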